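/- Let ψ̃_μ(x) = Σ_i ψ_i(x) μ_i with ψ_i differentiable and let x ~ N(0,I_d). Then E_x[‖ψ̃_μ(x)‖²] ≥ (1/4) E_x[(∫_{−1}^{1} x^T (∇ψ̃_μ(tx)) x̄ dt)²], where x̄ = x/‖x‖ (the integrand defined arbitrarily at x = 0). -/

import Mathlib

open MeasureTheory ProbabilityTheory Real Finset
open scoped RealInnerProductSpace BigOperators ENNReal NNReal

noncomputable def stdGaussian (d : ℕ) : Measure (EuclideanSpace ℝ (Fin d)) :=
  (Measure.pi fun _ : Fin d => gaussianReal 0 1).map ⇑(EuclideanSpace.equiv (Fin d) ℝ).symm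

noncomputable def gmmPsi {d n : ℕ} (w : Fin n → ℝ) (μ : Fin n → EuclideanSpace ℝ (Fin d))
    (i : Fin n) (x : EuclideanSpace ℝ (Fin d)) : ℝ :=
  w i * Real.exp (-‖x - μ i‖ ^ 2 / 2) / ∑ k, w k * Real.exp (-‖x - μ k‖ ^ 2 / 2)

noncomputable def psiTilde {d n : ℕ} (w : Fin n → ℝ) (μ : Fin n → EuclideanSpace ℝ (Fin d))
    (x : EuclideanSpace ℝ (Fin d)) : EuclideanSpace ℝ (Fin d) :=
  ∑ i, gmmPsi w μ i x • μ i

noncomputable def gmmPdf {d n : ℕ} (w : Fin n → ℝ) (μ : Fin n → EuclideanSpace ℝ (Fin d))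
    (x : EuclideanSpace ℝ (Fin d)) : ℝ :=
  ∑ i, w i * ((2 * Real.pi) ^ (-(d : ℝ) / 2) * Real.exp (-‖x - μ i‖ ^ 2 / 2))

noncomputable def gmmLoss {d n : ℕ} (w : Fin n → ℝ) (μ : Fin n → EuclideanSpace ℝ (Fin d)) : ℝ :=
  -∫ x, Real.log (gmmPdf w μ x / ((2 * Real.pi) ^ (-(d : ℝ) / 2) * Real.exp (-‖x‖ ^ 2 / 2)))
      ∂ stdGaussian d

noncomputable def gmmGrad {d n : ℕ} (w : Fin n → ℝ) (μ : Fin n → EuclideanSpace ℝ (Fin d))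
    (i : Fin n) : EuclideanSpace ℝ (Fin d) :=
  ∫ x, gmmPsi w μ i x • psiTilde w μ x ∂ stdGaussian d

/-! ### Auxiliary lemmas -/

section Aux

lemma aux_gaussianReal_map_neg : (gaussianReal 0 1).map (fun x => -x) = gaussianReal 0 1 := by
  have h := gaussianReal_map_const_mul (μ := 0) (v := 1) (-1)
  simp only [neg_mul, one_mul, mul_zero] at h
  convert h using 2
  ext : 1; norm_num

lemma aux_pi_gauss_neg (d : ℕ) :
    MeasurePreserving (fun a : Fin d → ℝ => -a)
      (Measure.pi fun _ => gaussianReal 0 1) (Measure.pi fun _ => gaussianReal 0 1) := by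
  have := measurePreserving_pi (fun _ : Fin d => gaussianReal 0 1)
      (fun _ : Fin d => gaussianReal 0 1) (f := fun _ x => -x)
      (fun i => ⟨measurable_neg, aux_gaussianReal_map_neg⟩)
  convert this using 1
  funext a i; rfl

lemma aux_stdGaussian_map_neg (d : ℕ) :
    (stdGaussian d).map (fun x => -x) = stdGaussian d := by
  unfold _root_.stdGaussian
  rw [Measure.map_map measurable_neg
    (EuclideanSpace.equiv (Fin d) ℝ).symm.continuous.measurable]
  have hcomp : (fun x : EuclideanSpace ℝ (Fin d) => -x) ∘
      ⇑(EuclideanSpace.equiv (Fin d) ℝ).symm =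
      ⇑(EuclideanSpace.equiv (Fin d) ℝ).symm ∘ (fun a : Fin d → ℝ => -a) := rfl
  rw [hcomp, ← Measure.map_map (EuclideanSpace.equiv (Fin d) ℝ).symm.continuous.measurable
    measurable_neg, (aux_pi_gauss_neg d).map_eq]

instance (d : ℕ) : IsProbabilityMeasure (stdGaussian d) :=
  Measure.isProbabilityMeasure_map (EuclideanSpace.equiv (Fin d) ℝ).symm.continuous.measurable.aemeasurable

variable {d n : ℕ} {w : Fin n → ℝ} {μ : Fin n → EuclideanSpace ℝ (Fin d)}

lemma aux_term_contDiff (i : Fin n) :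
    ContDiff ℝ ⊤ (fun x : EuclideanSpace ℝ (Fin d) => w i * Real.exp (-‖x - μ i‖ ^ 2 / 2)) := by
  apply contDiff_const.mul
  apply (Real.contDiff_exp.comp ?_)
  exact (((contDiff_id.sub contDiff_const).norm_sq ℝ).neg).div_const 2

lemma aux_denom_pos (hw : ∀ i, 0 < w i) [Nonempty (Fin n)] (x : EuclideanSpace ℝ (Fin d)) :
    0 < ∑ k, w k * Real.exp (-‖x - μ k‖ ^ 2 / 2) :=
  Finset.sum_pos (fun k _ => mul_pos (hw k) (Real.exp_pos _)) Finset.univ_nonempty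

lemma aux_gmmPsi_contDiff (hw : ∀ i, 0 < w i) [Nonempty (Fin n)] (i : Fin n) :
    ContDiff ℝ ⊤ (gmmPsi w μ i) := by
  apply (aux_term_contDiff i).div
  · exact ContDiff.sum (fun k _ => aux_term_contDiff k)
  · exact fun x => (aux_denom_pos hw x).ne'

lemma aux_psiTilde_contDiff (hw : ∀ i, 0 < w i) [Nonempty (Fin n)] :
    ContDiff ℝ ⊤ (psiTilde w μ) := by
  unfold psiTilde
  exact ContDiff.sum (fun i _ => (aux_gmmPsi_contDiff hw i).smul contDiff_const)

lemma aux_gmmPsi_mem (hw : ∀ i, 0 < w i) [Nonempty (Fin n)] (i : Fin n)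
    (x : EuclideanSpace ℝ (Fin d)) : gmmPsi w μ i x ∈ Set.Icc (0:ℝ) 1 := by
  have hD := aux_denom_pos (μ := μ) hw x
  constructor
  · exact div_nonneg (le_of_lt (mul_pos (hw i) (Real.exp_pos _))) hD.le
  · rw [gmmPsi, div_le_one hD]
    exact Finset.single_le_sum (f := fun k => w k * Real.exp (-‖x - μ k‖ ^ 2 / 2))
      (fun k _ => (mul_pos (hw k) (Real.exp_pos _)).le) (Finset.mem_univ i)

lemma aux_psiTilde_norm_le (hw : ∀ i, 0 < w i) [Nonempty (Fin n)]
    (x : EuclideanSpace ℝ (Fin d)) :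
    ‖psiTilde w μ x‖ ≤ ∑ i, ‖μ i‖ := by
  refine (norm_sum_le _ _).trans (Finset.sum_le_sum fun i _ => ?_)
  rw [norm_smul]
  have h := aux_gmmPsi_mem hw (μ := μ) i x
  calc ‖gmmPsi w μ i x‖ * ‖μ i‖ ≤ 1 * ‖μ i‖ := by
        apply mul_le_mul_of_nonneg_right _ (norm_nonneg _)
        rw [Real.norm_eq_abs, abs_le]; exact ⟨by linarith [h.1], h.2⟩
    _ = ‖μ i‖ := one_mul _

lemma aux_line_integral_eq {ψ : EuclideanSpace ℝ (Fin d) → EuclideanSpace ℝ (Fin d)}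
    (hcd : ContDiff ℝ ⊤ ψ) (x : EuclideanSpace ℝ (Fin d)) :
    ∫ t in (-1:ℝ)..1, ⟪x, fderiv ℝ ψ (t • x) (‖x‖⁻¹ • x)⟫
      = ⟪‖x‖⁻¹ • x, ψ x⟫ - ⟪‖x‖⁻¹ • x, ψ (-x)⟫ := by
  set u : EuclideanSpace ℝ (Fin d) := ‖x‖⁻¹ • x with hu
  have hdiff : Differentiable ℝ ψ := hcd.differentiable (by simp)
  have hrw : ∀ t : ℝ, ⟪x, fderiv ℝ ψ (t • x) u⟫ = ⟪u, fderiv ℝ ψ (t • x) x⟫ := by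
    intro t
    rw [hu, (fderiv ℝ ψ (t • x)).map_smul, real_inner_smul_right, ← real_inner_smul_left]
  have hF : ∀ t : ℝ, HasDerivAt (fun s : ℝ => ⟪u, ψ (s • x)⟫)
      (⟪u, fderiv ℝ ψ (t • x) x⟫) t := by
    intro t
    have hs : HasDerivAt (fun s : ℝ => s • x) x t := by
      simpa using (hasDerivAt_id t).smul_const x
    have hcomp : HasDerivAt (fun s : ℝ => ψ (s • x)) (fderiv ℝ ψ (t • x) x) t :=
      (hdiff (t • x)).hasFDerivAt.comp_hasDerivAt t hs
    have := ((innerSL ℝ u).hasFDerivAt (x := ψ (t • x))).comp_hasDerivAt t hcomp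
    exact this
  have hcont : Continuous fun t : ℝ => ⟪u, fderiv ℝ ψ (t • x) x⟫ := by
    have h1 : Continuous fun t : ℝ => fderiv ℝ ψ (t • x) :=
      (hcd.continuous_fderiv (by simp)).comp (by continuity)
    exact continuous_const.inner (h1.clm_apply continuous_const)
  calc ∫ t in (-1:ℝ)..1, ⟪x, fderiv ℝ ψ (t • x) u⟫
      = ∫ t in (-1:ℝ)..1, ⟪u, fderiv ℝ ψ (t • x) x⟫ := by simp_rw [hrw]
    _ = ⟪u, ψ ((1:ℝ) • x)⟫ - ⟪u, ψ ((-1:ℝ) • x)⟫ :=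
        intervalIntegral.integral_eq_sub_of_hasDerivAt (fun t _ => hF t)
          (hcont.intervalIntegrable _ _)
    _ = ⟪u, ψ x⟫ - ⟪u, ψ (-x)⟫ := by rw [one_smul, neg_one_smul]

end Aux

/-- `E[‖ψ̃_μ(x)‖²] ≥ (1/4) E[(∫_{−1}^1 xᵀ ∇ψ̃_μ(tx) x̄ dt)²]` where `x̄ = x/‖x‖`. -/
theorem psiTilde_sq_ge_line_integral {d n : ℕ} (w : Fin n → ℝ)
    (μ : Fin n → EuclideanSpace ℝ (Fin d))
    (hw : ∀ i, 0 < w i) (hsum : ∑ i, w i = 1) :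
    (1 / 4 : ℝ) * ∫ x,
        (∫ t in (-1 : ℝ)..1, ⟪x, fderiv ℝ (psiTilde w μ) (t • x) (‖x‖⁻¹ • x)⟫) ^ 2
          ∂ stdGaussian d
      ≤ ∫ x, ‖psiTilde w μ x‖ ^ 2 ∂ stdGaussian d := by
  haveI : Nonempty (Fin n) := by
    rcases Nat.eq_zero_or_pos n with hn | hn
    · subst hn; simp at hsum
    · exact Fin.pos_iff_nonempty.mp hn
  set ψ := psiTilde w μ with hψ
  set γ := stdGaussian d with hγ
  have hcd : ContDiff ℝ ⊤ ψ := aux_psiTilde_contDiff hw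
  have hψcont : Continuous ψ := hcd.continuous
  set C : ℝ := ∑ i, ‖μ i‖ with hC
  -- integrability
  have hmeas1 : AEStronglyMeasurable (fun x => ‖ψ x‖ ^ 2) γ :=
    ((hψcont.norm).pow 2).aestronglyMeasurable
  have hint1 : Integrable (fun x => ‖ψ x‖ ^ 2) γ := by
    refine (integrable_const (C ^ 2)).mono' hmeas1 (ae_of_all _ fun x => ?_)
    rw [Real.norm_eq_abs, abs_of_nonneg (by positivity)]
    exact pow_le_pow_left₀ (norm_nonneg _) (aux_psiTilde_norm_le hw x) 2
  have hint2 : Integrable (fun x => ‖ψ (-x)‖ ^ 2) γ := by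
    refine (integrable_const (C ^ 2)).mono'
      (((hψcont.comp continuous_neg).norm.pow 2).aestronglyMeasurable)
      (ae_of_all _ fun x => ?_)
    rw [Real.norm_eq_abs, abs_of_nonneg (by positivity)]
    exact pow_le_pow_left₀ (norm_nonneg _) (aux_psiTilde_norm_le hw (-x)) 2
  -- pointwise bound
  have hpt : ∀ x, (∫ t in (-1:ℝ)..1, ⟪x, fderiv ℝ ψ (t • x) (‖x‖⁻¹ • x)⟫) ^ 2
      ≤ 2 * ‖ψ x‖ ^ 2 + 2 * ‖ψ (-x)‖ ^ 2 := by
    intro x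
    by_cases hx : x = 0
    · subst hx
      have h0 : (∫ t in (-1:ℝ)..1,
          ⟪(0 : EuclideanSpace ℝ (Fin d)), fderiv ℝ ψ (t • (0 : EuclideanSpace ℝ (Fin d)))
            (‖(0 : EuclideanSpace ℝ (Fin d))‖⁻¹ • (0 : EuclideanSpace ℝ (Fin d)))⟫) = 0 := by
        simp [inner_zero_left]
      rw [h0]
      norm_num
    · rw [aux_line_integral_eq hcd x]
      set u : EuclideanSpace ℝ (Fin d) := ‖x‖⁻¹ • x with hu
      have hnu : ‖u‖ = 1 := norm_smul_inv_norm hx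
      set a : ℝ := ⟪u, ψ x⟫
      set b : ℝ := ⟪u, ψ (-x)⟫
      have ha : |a| ≤ ‖ψ x‖ := by
        have := abs_real_inner_le_norm u (ψ x)
        rwa [hnu, one_mul] at this
      have hb : |b| ≤ ‖ψ (-x)‖ := by
        have := abs_real_inner_le_norm u (ψ (-x))
        rwa [hnu, one_mul] at this
      have ha2 : a ^ 2 ≤ ‖ψ x‖ ^ 2 := by
        rw [← sq_abs]; exact pow_le_pow_left₀ (abs_nonneg _) ha 2
      have hb2 : b ^ 2 ≤ ‖ψ (-x)‖ ^ 2 := by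
        rw [← sq_abs]; exact pow_le_pow_left₀ (abs_nonneg _) hb 2
      nlinarith [sq_nonneg (a + b)]
  -- integrate
  have key : (∫ x, (∫ t in (-1:ℝ)..1, ⟪x, fderiv ℝ ψ (t • x) (‖x‖⁻¹ • x)⟫) ^ 2 ∂γ)
      ≤ ∫ x, (2 * ‖ψ x‖ ^ 2 + 2 * ‖ψ (-x)‖ ^ 2) ∂γ :=
    integral_mono_of_nonneg (ae_of_all _ fun x => sq_nonneg _)
      ((hint1.const_mul 2).add (hint2.const_mul 2)) (ae_of_all _ hpt)
  have hsplit : (∫ x, (2 * ‖ψ x‖ ^ 2 + 2 * ‖ψ (-x)‖ ^ 2) ∂γ)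
      = 2 * (∫ x, ‖ψ x‖ ^ 2 ∂γ) + 2 * (∫ x, ‖ψ (-x)‖ ^ 2 ∂γ) := by
    rw [integral_add (hint1.const_mul 2) (hint2.const_mul 2),
      MeasureTheory.integral_const_mul, MeasureTheory.integral_const_mul]
  have hneg : (∫ x, ‖ψ (-x)‖ ^ 2 ∂γ) = ∫ x, ‖ψ x‖ ^ 2 ∂γ := by
    have h1 : (∫ y, ‖ψ y‖ ^ 2 ∂(γ.map (fun x => -x))) = ∫ x, ‖ψ (-x)‖ ^ 2 ∂γ :=
      integral_map measurable_neg.aemeasurable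
        (((hψcont.norm).pow 2).aestronglyMeasurable)
    rw [← h1, hγ, aux_stdGaussian_map_neg d]
  rw [hsplit, hneg] at key
  linarith
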